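/- arXiv:2504.19393 — 2 statements merged into one kernel-verified Lean document; each statement's English description precedes it below -/
import Mathlib

section
/- Let $X$ be an $n\times p$ real matrix, $\lambda>0$, $\tilde{y}\in\mathbb{R}^n$, and let $W = XX^{\top}+\lambda I_n$. For the $i$th column $X_i$ of $X$, the $i$th diagonal entry of $(X^{\top}X+\lambda I_p)^{-1} + \dfrac{(X^{\top}X+\lambda I_p)^{-1}X^{\top}\tilde{y}\tilde{y}^{\top}X(X^{\top}X+\lambda I_p)^{-1}}{\tilde{y}^{\top}\tilde{y} - \tilde{y}^{\top}X(X^{\top}X+\lambda I_p)^{-1}X^{\top}\tilde{y}}$ equals $\dfrac{1}{\lambda} + \dfrac{(X_i^{\top}W^{-1}\tilde{y})^2}{\lambda\,\tilde{y}^{\top}W^{-1}\tilde{y}} - \dfrac{1}{\lambda}X_i^{\top}W^{-1}X_i$, provided the denominator $\tilde{y}^{\top}\tilde{y} - \tilde{y}^{\top}X(X^{\top}X+\lambda I_p)^{-1}X^{\top}\tilde{y}$ is nonzero. -/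
open Matrix

lemma aux_mul_vecMulVec {m n p : Type*} [Fintype n]
    (M : Matrix m n ℝ) (a : n → ℝ) (b : p → ℝ) :
    M * vecMulVec a b = vecMulVec (M *ᵥ a) b := by
  ext i j
  simp only [mul_apply, vecMulVec_apply, mulVec, dotProduct, Finset.sum_mul]
  exact Finset.sum_congr rfl fun k _ => by ring

lemma aux_vecMulVec_mul {m p q : Type*} [Fintype p]
    (a : m → ℝ) (b : p → ℝ) (N : Matrix p q ℝ) :
    vecMulVec a b * N = vecMulVec a (b ᵥ* N) := by
  ext i j
  simp only [mul_apply, vecMulVec_apply, vecMul, dotProduct, Finset.mul_sum]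
  exact Finset.sum_congr rfl fun k _ => by ring

lemma ridge_posdef {m q : ℕ} (Y : Matrix (Fin m) (Fin q) ℝ) {l : ℝ} (hl : 0 < l) :
    (Yᵀ * Y + l • (1 : Matrix (Fin q) (Fin q) ℝ)).PosDef := by
  have h1 : (Yᵀ * Y).PosSemidef := by
    have := posSemidef_conjTranspose_mul_self Y
    rwa [conjTranspose_eq_transpose_of_trivial] at this
  have h2 : (l • (1 : Matrix (Fin q) (Fin q) ℝ)).PosDef := by
    refine ⟨?_, fun x hx => ?_⟩
    · simp [IsHermitian, conjTranspose_smul]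
    · exact ((Matrix.PosDef.one (n := Fin q) (R := ℝ)).smul hl).2 hx
  exact Matrix.PosDef.posSemidef_add h1 h2

theorem ridge_partial_variance_diag {n p : ℕ} (X : Matrix (Fin n) (Fin p) ℝ)
    (l : ℝ) (hl : 0 < l) (y : Fin n → ℝ) (i : Fin p)
    (hd : y ⬝ᵥ y - y ⬝ᵥ ((X * (Xᵀ * X + l • (1 : Matrix (Fin p) (Fin p) ℝ))⁻¹ * Xᵀ) *ᵥ y) ≠ 0) :
    ((Xᵀ * X + l • (1 : Matrix (Fin p) (Fin p) ℝ))⁻¹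
      + (y ⬝ᵥ y - y ⬝ᵥ ((X * (Xᵀ * X + l • (1 : Matrix (Fin p) (Fin p) ℝ))⁻¹ * Xᵀ) *ᵥ y))⁻¹ •
        ((Xᵀ * X + l • (1 : Matrix (Fin p) (Fin p) ℝ))⁻¹ * Xᵀ * vecMulVec y y * X *
          (Xᵀ * X + l • (1 : Matrix (Fin p) (Fin p) ℝ))⁻¹)) i i
      = 1 / l
        + ((fun k => X k i) ⬝ᵥ ((X * Xᵀ + l • (1 : Matrix (Fin n) (Fin n) ℝ))⁻¹ *ᵥ y)) ^ 2
            / (l * (y ⬝ᵥ ((X * Xᵀ + l • (1 : Matrix (Fin n) (Fin n) ℝ))⁻¹ *ᵥ y)))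
        - (1 / l) * ((fun k => X k i) ⬝ᵥ ((X * Xᵀ + l • (1 : Matrix (Fin n) (Fin n) ℝ))⁻¹ *ᵥ (fun k => X k i))) := by
  set A := Xᵀ * X + l • (1 : Matrix (Fin p) (Fin p) ℝ) with hA_def
  set W := X * Xᵀ + l • (1 : Matrix (Fin n) (Fin n) ℝ) with hW_def
  have hA : IsUnit A.det := (ridge_posdef X hl).isUnit.map detMonoidHom
  have hW : IsUnit W.det := by
    have := (ridge_posdef Xᵀ hl).isUnit.map detMonoidHom
    rwa [transpose_transpose] at this
  have hAW : A * Xᵀ = Xᵀ * W := by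
    rw [hA_def, hW_def, Matrix.add_mul, Matrix.mul_add, Matrix.smul_mul, Matrix.mul_smul,
      Matrix.one_mul, Matrix.mul_one, Matrix.mul_assoc]
  have hXW : A⁻¹ * Xᵀ = Xᵀ * W⁻¹ :=
    calc A⁻¹ * Xᵀ = A⁻¹ * (Xᵀ * W * W⁻¹) := by
          rw [Matrix.mul_assoc Xᵀ W W⁻¹, Matrix.mul_nonsing_inv W hW, Matrix.mul_one]
      _ = A⁻¹ * (A * Xᵀ * W⁻¹) := by rw [hAW]
      _ = Xᵀ * W⁻¹ := by
          rw [← Matrix.mul_assoc, ← Matrix.mul_assoc, Matrix.nonsing_inv_mul A hA,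
            Matrix.one_mul]
  have hAsym : Aᵀ = A := by
    rw [hA_def, transpose_add, transpose_mul, transpose_transpose, transpose_smul,
      transpose_one]
  have hWsym : Wᵀ = W := by
    rw [hW_def, transpose_add, transpose_mul, transpose_transpose, transpose_smul,
      transpose_one]
  have hWX : X * A⁻¹ = W⁻¹ * X := by
    have := congrArg transpose hXW
    simp only [transpose_mul, transpose_transpose, transpose_nonsing_inv] at this
    rwa [hAsym, hWsym] at this
  have hAXW : A * (Xᵀ * W⁻¹) = Xᵀ := by
    rw [← Matrix.mul_assoc, hAW, Matrix.mul_assoc, Matrix.mul_nonsing_inv W hW,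
      Matrix.mul_one]
  have hAinv : A⁻¹ = l⁻¹ • ((1 : Matrix (Fin p) (Fin p) ℝ) - Xᵀ * W⁻¹ * X) := by
    apply Matrix.inv_eq_right_inv
    calc A * (l⁻¹ • ((1 : Matrix (Fin p) (Fin p) ℝ) - Xᵀ * W⁻¹ * X))
        = l⁻¹ • (A - A * (Xᵀ * W⁻¹) * X) := by
          rw [Matrix.mul_smul, Matrix.mul_sub, Matrix.mul_one,
            ← Matrix.mul_assoc A (Xᵀ * W⁻¹) X]
      _ = l⁻¹ • (l • (1 : Matrix (Fin p) (Fin p) ℝ)) := by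
          rw [hAXW]; congr 1; rw [hA_def]; abel
      _ = 1 := by rw [smul_smul, inv_mul_cancel₀ hl.ne', one_smul]
  have hXAX : X * A⁻¹ * Xᵀ = 1 - l • W⁻¹ := by
    rw [hWX, Matrix.mul_assoc]
    have hXX : X * Xᵀ = W - l • (1 : Matrix (Fin n) (Fin n) ℝ) := by rw [hW_def]; abel
    rw [hXX, Matrix.mul_sub, Matrix.nonsing_inv_mul W hW, Matrix.mul_smul, Matrix.mul_one]
  have hden : y ⬝ᵥ y - y ⬝ᵥ ((X * A⁻¹ * Xᵀ) *ᵥ y) = l * (y ⬝ᵥ W⁻¹ *ᵥ y) := by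
    rw [hXAX, Matrix.sub_mulVec, Matrix.one_mulVec, smul_mulVec, dotProduct_sub,
      dotProduct_smul]
    simp only [smul_eq_mul]
    ring
  set q : ℝ := y ⬝ᵥ W⁻¹ *ᵥ y with hq_def
  have hq : q ≠ 0 := by
    rw [hden] at hd
    exact fun h => hd (by rw [h, mul_zero])
  -- the rank-one middle matrix
  have hmid : A⁻¹ * Xᵀ * vecMulVec y y * X * A⁻¹
      = vecMulVec ((Xᵀ * W⁻¹) *ᵥ y) ((Xᵀ * W⁻¹) *ᵥ y) := by
    rw [hXW, aux_mul_vecMulVec, aux_vecMulVec_mul, aux_vecMulVec_mul, Matrix.vecMul_vecMul,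
      hWX,
      show y ᵥ* (W⁻¹ * X) = (W⁻¹ * X)ᵀ *ᵥ y from by
        rw [← Matrix.vecMul_transpose, transpose_transpose],
      transpose_mul, transpose_nonsing_inv, hWsym]
  -- entrywise computations
  have hu_i : ((Xᵀ * W⁻¹) *ᵥ y) i = (fun k => X k i) ⬝ᵥ (W⁻¹ *ᵥ y) := by
    rw [← Matrix.mulVec_mulVec]
    simp [mulVec, dotProduct, transpose_apply]
  have ht : (Xᵀ * W⁻¹ * X) i i = (fun k => X k i) ⬝ᵥ (W⁻¹ *ᵥ (fun k => X k i)) := by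
    rw [Matrix.mul_assoc]
    simp [mul_apply, mulVec, dotProduct, transpose_apply]
  rw [Matrix.add_apply, Matrix.smul_apply, hmid, hden, hAinv, Matrix.smul_apply,
    Matrix.sub_apply, Matrix.one_apply_eq, ht, vecMulVec_apply, hu_i]
  set s : ℝ := (fun k => X k i) ⬝ᵥ (W⁻¹ *ᵥ y) with hs_def
  set t : ℝ := (fun k => X k i) ⬝ᵥ (W⁻¹ *ᵥ (fun k => X k i)) with ht_def
  simp only [smul_eq_mul]
  field_simp
  ring
end

section
/- Let $X = VDU^{\top}\Sigma^{1/2}$ where $V$ is an $n\times n$ orthogonal matrix, $D$ an $n\times n$ invertible diagonal matrix, $U$ a $p\times n$ matrix with $U^{\top}U = I_n$, and $\Sigma$ a $p\times p$ symmetric positive definite matrix. Then for any $\lambda > 0$, $X^{\top}(XX^{\top}+\lambda I_n)^{-1}X = \Sigma^{1/2}U\,(U^{\top}\Sigma U + \lambda D^{-2})^{-1}\,U^{\top}\Sigma^{1/2}$. -/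
open Matrix
section PosSemidefSqrt
open scoped ComplexOrder
noncomputable def posSemidefSqrt {n 𝕜 : Type*} [Fintype n] [DecidableEq n] [RCLike 𝕜]
    {A : Matrix n n 𝕜} (hA : A.PosSemidef) : Matrix n n 𝕜 :=
  (hA.1.eigenvectorUnitary : Matrix n n 𝕜) * diagonal ((↑) ∘ (√·) ∘ hA.1.eigenvalues) *
    (star hA.1.eigenvectorUnitary : Matrix n n 𝕜)
end PosSemidefSqrt

theorem posSemidefSqrt_transpose_real {p : ℕ} {A : Matrix (Fin p) (Fin p) ℝ}
    (hA : A.PosSemidef) : (posSemidefSqrt hA)ᵀ = posSemidefSqrt hA := by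
  simp [posSemidefSqrt, transpose_mul, Matrix.mul_assoc, Matrix.star_eq_conjTranspose]

theorem posSemidefSqrt_mul_self_real {p : ℕ} {A : Matrix (Fin p) (Fin p) ℝ}
    (hA : A.PosSemidef) : posSemidefSqrt hA * posSemidefSqrt hA = A := by
  have hW : (star hA.1.eigenvectorUnitary : Matrix (Fin p) (Fin p) ℝ) *
      (hA.1.eigenvectorUnitary : Matrix (Fin p) (Fin p) ℝ) = 1 :=
    Unitary.coe_star_mul_self _
  conv_rhs => rw [hA.1.spectral_theorem]
  rw [Unitary.conjStarAlgAut_apply, posSemidefSqrt]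
  simp only [Matrix.mul_assoc]
  rw [← Matrix.mul_assoc (star _ : Matrix (Fin p) (Fin p) ℝ), hW, Matrix.one_mul,
    ← Matrix.mul_assoc (diagonal _), diagonal_mul_diagonal]
  congr 3
  ext i
  simp [Real.mul_self_sqrt (hA.eigenvalues_nonneg i)]

theorem ridge_projection_svd_form {n p : ℕ}
    (V : Matrix (Fin n) (Fin n) ℝ) (hV : Vᵀ * V = 1)
    (d : Fin n → ℝ) (hd : ∀ i, d i ≠ 0)
    (U : Matrix (Fin p) (Fin n) ℝ) (hU : Uᵀ * U = 1)
    (Sig : Matrix (Fin p) (Fin p) ℝ) (hSig : Sig.PosDef)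
    (l : ℝ) (hl : 0 < l) :
    (V * Matrix.diagonal d * Uᵀ * posSemidefSqrt hSig.posSemidef)ᵀ *
        ((V * Matrix.diagonal d * Uᵀ * posSemidefSqrt hSig.posSemidef) *
            (V * Matrix.diagonal d * Uᵀ * posSemidefSqrt hSig.posSemidef)ᵀ
          + l • (1 : Matrix (Fin n) (Fin n) ℝ))⁻¹ *
        (V * Matrix.diagonal d * Uᵀ * posSemidefSqrt hSig.posSemidef)
      = posSemidefSqrt hSig.posSemidef * U *
          (Uᵀ * Sig * U + l • ((Matrix.diagonal d)⁻¹ * (Matrix.diagonal d)⁻¹))⁻¹ *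
          Uᵀ * posSemidefSqrt hSig.posSemidef := by
  set S := posSemidefSqrt hSig.posSemidef with hSdef
  set D := Matrix.diagonal d with hDdef
  set Di := Matrix.diagonal (fun i => (d i)⁻¹) with hDidef
  have hSt : Sᵀ = S := by
    exact posSemidefSqrt_transpose_real hSig.posSemidef
  have hSS : S * S = Sig := posSemidefSqrt_mul_self_real hSig.posSemidef
  have hVVt : V * Vᵀ = 1 := mul_eq_one_comm.mp hV
  have hDDi : D * Di = 1 := by
    rw [hDdef, hDidef, diagonal_mul_diagonal]
    convert Matrix.diagonal_one with i
    exact mul_inv_cancel₀ (hd i)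
  have hDiD : Di * D = 1 := mul_eq_one_comm.mp hDDi
  have hDinv : D⁻¹ = Di := inv_eq_right_inv hDDi
  have hDt : Dᵀ = D := Matrix.diagonal_transpose d
  -- cancellation helpers
  have cVtV : ∀ {k : ℕ} (C : Matrix (Fin n) (Fin k) ℝ), Vᵀ * (V * C) = C := fun C => by
    rw [← Matrix.mul_assoc, hV, Matrix.one_mul]
  have cDDi : ∀ {k : ℕ} (C : Matrix (Fin n) (Fin k) ℝ), D * (Di * C) = C := fun C => by
    rw [← Matrix.mul_assoc, hDDi, Matrix.one_mul]
  have cDiD : ∀ {k : ℕ} (C : Matrix (Fin n) (Fin k) ℝ), Di * (D * C) = C := fun C => by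
    rw [← Matrix.mul_assoc, hDiD, Matrix.one_mul]
  -- the middle matrix
  set M := Uᵀ * Sig * U + l • (Di * Di) with hMdef
  have hMpd : M.PosDef := by
    apply Matrix.PosDef.posSemidef_add
    · have h := hSig.posSemidef.conjTranspose_mul_mul_same U
      simpa using h
    · rw [hDidef, diagonal_mul_diagonal, ← Matrix.diagonal_smul]
      exact Matrix.PosDef.diagonal fun i =>
        mul_pos hl (mul_self_pos.mpr (inv_ne_zero (hd i)))
  have hMdet : IsUnit M.det := (Matrix.isUnit_iff_isUnit_det M).mp hMpd.isUnit
  have cMMi : ∀ {k : ℕ} (C : Matrix (Fin n) (Fin k) ℝ), M * (M⁻¹ * C) = C := fun C => by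
    rw [← Matrix.mul_assoc, Matrix.mul_nonsing_inv _ hMdet, Matrix.one_mul]
  set X := V * D * Uᵀ * S with hXdef
  set N := V * Di * M⁻¹ * Di * Vᵀ with hNdef
  have hXt : Xᵀ = S * U * D * Vᵀ := by
    rw [hXdef]
    simp [Matrix.transpose_mul, hSt, hDt, Matrix.mul_assoc]
  have key : (X * Xᵀ + l • (1 : Matrix (Fin n) (Fin n) ℝ)) * N = 1 := by
    have h1 : X * Xᵀ * N = V * (D * ((Uᵀ * Sig * U) * (M⁻¹ * (Di * Vᵀ)))) := by
      rw [hXt, hXdef, hNdef]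
      simp only [Matrix.mul_assoc, cVtV, cDDi, cDiD]
      rw [← Matrix.mul_assoc S S, hSS]
    have h2 : (l • (1 : Matrix (Fin n) (Fin n) ℝ)) * N
        = V * (D * ((l • (Di * Di)) * (M⁻¹ * (Di * Vᵀ)))) := by
      rw [hNdef]
      simp only [Matrix.smul_mul, Matrix.mul_smul, Matrix.one_mul, Matrix.mul_assoc, cDDi]
    rw [add_mul, h1, h2, ← Matrix.mul_add, ← Matrix.mul_add, ← Matrix.add_mul, ← hMdef,
      cMMi, cDDi, hVVt]
  have hinv : (X * Xᵀ + l • (1 : Matrix (Fin n) (Fin n) ℝ))⁻¹ = N :=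
    inv_eq_right_inv key
  rw [hinv, hXt, hXdef, hNdef, hDinv, ← hMdef]
  simp only [Matrix.mul_assoc, cVtV, cDDi, cDiD]
end
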